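/- Let γ = (γ_1, γ_2) be a composition of n with γ_1, γ_2 > 0, and let I_1 ⊆ {1,…,γ_1} and I_2 ⊆ {γ_1+1,…,n} be subsets with a := |I_1|, b := |I_2|, and a + b even. If a and b are both odd, then T_{w_γ} C_{I_1} C_{I_2} lies in [HC_n, HC_n]. If a and b are both even, then there exists ε ∈ {1, −1} such that T_{w_γ} C_{I_1} C_{I_2} − ε T_{w_γ} lies in [HC_n, HC_n]. -/

import Mathlib

noncomputable section

/-- The ring `ℤ[1/2]`. -/
abbrev Zh : Type := Localization.Away (2 : ℤ)

/-- The ring `A = ℤ[1/2][v, v⁻¹]` of Laurent polynomials over `ℤ[1/2]`. -/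
def Av : Type := LaurentPolynomial Zh

noncomputable instance : CommRing Av := inferInstanceAs (CommRing (LaurentPolynomial Zh))

/-- The indeterminate `v ∈ A`. -/
def vA : Av := (LaurentPolynomial.T 1 : LaurentPolynomial Zh)

/-- Generators of the Hecke–Clifford algebra: `T i` (0-based, for `T_{i+1}` of the paper,
`i = 0, …, n-2`) and `c j` (0-based, for `c_{j+1}`, `j = 0, …, n-1`). -/
inductive HCgen (n : ℕ) : Type
  | T : Fin (n - 1) → HCgen n
  | c : Fin n → HCgen n

/-- For a `T`-index `i`, the `c`-index of the first strand that `T_i` involves. -/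
def lo {n : ℕ} (i : Fin (n - 1)) : Fin n := ⟨i.1, by have := i.2; omega⟩

/-- For a `T`-index `i`, the `c`-index of the second strand that `T_i` involves. -/
def hi {n : ℕ} (i : Fin (n - 1)) : Fin n := ⟨i.1 + 1, by have := i.2; omega⟩

/-- The defining relations of the Hecke–Clifford algebra. -/
inductive HCrel (n : ℕ) : FreeAlgebra Av (HCgen n) → FreeAlgebra Av (HCgen n) → Prop
  | quad (i : Fin (n - 1)) :
      HCrel n ((FreeAlgebra.ι Av (HCgen.T i) - algebraMap Av (FreeAlgebra Av (HCgen n)) vA) *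
        (FreeAlgebra.ι Av (HCgen.T i) + 1)) 0
  | Tcomm (i j : Fin (n - 1)) (h : i.1 + 1 < j.1) :
      HCrel n (FreeAlgebra.ι Av (HCgen.T i) * FreeAlgebra.ι Av (HCgen.T j))
        (FreeAlgebra.ι Av (HCgen.T j) * FreeAlgebra.ι Av (HCgen.T i))
  | braid (i j : Fin (n - 1)) (h : i.1 + 1 = j.1) :
      HCrel n (FreeAlgebra.ι Av (HCgen.T i) * FreeAlgebra.ι Av (HCgen.T j) *
          FreeAlgebra.ι Av (HCgen.T i))
        (FreeAlgebra.ι Av (HCgen.T j) * FreeAlgebra.ι Av (HCgen.T i) *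
          FreeAlgebra.ι Av (HCgen.T j))
  | csq (i : Fin n) :
      HCrel n (FreeAlgebra.ι Av (HCgen.c i) * FreeAlgebra.ι Av (HCgen.c i)) 1
  | canti (i j : Fin n) (h : i ≠ j) :
      HCrel n (FreeAlgebra.ι Av (HCgen.c i) * FreeAlgebra.ι Av (HCgen.c j))
        (-(FreeAlgebra.ι Av (HCgen.c j) * FreeAlgebra.ι Av (HCgen.c i)))
  | Tccomm (i : Fin (n - 1)) (j : Fin n) (h1 : j ≠ lo i) (h2 : j ≠ hi i) :
      HCrel n (FreeAlgebra.ι Av (HCgen.T i) * FreeAlgebra.ι Av (HCgen.c j))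
        (FreeAlgebra.ι Av (HCgen.c j) * FreeAlgebra.ι Av (HCgen.T i))
  | Tc (i : Fin (n - 1)) :
      HCrel n (FreeAlgebra.ι Av (HCgen.T i) * FreeAlgebra.ι Av (HCgen.c (lo i)))
        (FreeAlgebra.ι Av (HCgen.c (hi i)) * FreeAlgebra.ι Av (HCgen.T i))

/-- The Hecke–Clifford algebra `HC_n` over `A`. -/
abbrev HC (n : ℕ) : Type := RingQuot (HCrel n)

/-- The generator `T_i` of `HC_n` (`0`-based index). -/
def Tg {n : ℕ} (i : Fin (n - 1)) : HC n :=
  RingQuot.mkAlgHom Av (HCrel n) (FreeAlgebra.ι Av (HCgen.T i))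

/-- The generator `c_j` of `HC_n` (`0`-based index). -/
def cg {n : ℕ} (j : Fin n) : HC n :=
  RingQuot.mkAlgHom Av (HCrel n) (FreeAlgebra.ι Av (HCgen.c j))

/-- `T_{i_1} ⋯ T_{i_k}` for a word `L = [i_1, …, i_k]`. -/
def Tw {n : ℕ} (L : List (Fin (n - 1))) : HC n := (L.map Tg).prod

/-- `C_I = c_{i_1} ⋯ c_{i_k}` for a subset `I = {i_1 < ⋯ < i_k}`. -/
def Cset {n : ℕ} (I : Finset (Fin n)) : HC n := ((I.sort (· ≤ ·)).map cg).prod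

/-- The `A`-submodule `[HC_n, HC_n]` spanned by all commutators. -/
def commSpan (n : ℕ) : Submodule Av (HC n) :=
  Submodule.span Av {x : HC n | ∃ a b : HC n, x = a * b - b * a}

/-- The simple transposition `s_i = (i+1, i+2)` (paper numbering) in `S_n`. -/
def sgen {n : ℕ} (i : Fin (n - 1)) : Equiv.Perm (Fin n) := Equiv.swap (lo i) (hi i)

/-- The product of the simple transpositions along a word. -/
def wordProd {n : ℕ} (L : List (Fin (n - 1))) : Equiv.Perm (Fin n) := (L.map sgen).prod

/-- The Coxeter length of a permutation: the minimal length of a word in the simple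
transpositions expressing it. -/
def plen {n : ℕ} (σ : Equiv.Perm (Fin n)) : ℕ :=
  sInf {k | ∃ L : List (Fin (n - 1)), wordProd L = σ ∧ L.length = k}

/-- `L` is a reduced expression of `σ`. -/
def IsReducedWord {n : ℕ} (σ : Equiv.Perm (Fin n)) (L : List (Fin (n - 1))) : Prop :=
  wordProd L = σ ∧ L.length = plen σ

/-- The canonical reduced word of the permutation `w_γ` attached to a composition `γ` of `n`:
the increasing list of all `0`-based `T`-indices `i ∈ {0, …, n-2}` such that `i+1` is not a
partial sum of `γ`. -/
def compWord {n : ℕ} (γ : Composition n) : List (Fin (n - 1)) :=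
  (List.finRange (n - 1)).filter (fun i => i.1 + 1 ∉ γ.blocks.scanl (· + ·) 0)

/-- The element `T_{w_γ}` of `HC_n` for a composition `γ` of `n`. -/
def Twγ {n : ℕ} (γ : Composition n) : HC n := Tw (compWord γ)

/-- The permutation `w_γ` attached to a composition `γ` of `n`. -/
def wγ {n : ℕ} (γ : Composition n) : Equiv.Perm (Fin n) := wordProd (compWord γ)

/-- A composition is a partition if its parts are weakly decreasing. -/
def IsPartitionC {n : ℕ} (γ : Composition n) : Prop := γ.blocks.Pairwise (· ≥ ·)

/-- An odd partition: a partition all of whose parts are odd. -/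
def IsOddPartitionC {n : ℕ} (γ : Composition n) : Prop :=
  IsPartitionC γ ∧ ∀ p ∈ γ.blocks, Odd p

instance {n : ℕ} (γ : Composition n) : Decidable (IsOddPartitionC γ) := by
  unfold IsOddPartitionC IsPartitionC
  infer_instance

/-- A trace function on `HC_n`: an `A`-linear map that is symmetric on products and vanishes
on the odd part, i.e. on all elements `T_σ C_I` with `|I|` odd (with `T_σ` given by any
reduced expression of `σ`). -/
def IsTraceFun {n : ℕ} (φ : HC n →ₗ[Av] Av) : Prop :=
  (∀ a b : HC n, φ (a * b) = φ (b * a)) ∧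
  ∀ L : List (Fin (n - 1)), IsReducedWord (wordProd L) L →
    ∀ I : Finset (Fin n), Odd I.card → φ (Tw L * Cset I) = 0

/-- The element `(v - 1)/2 ∈ A`. -/
def halfvm1 : Av := Ring.inverse (2 : Av) * (vA - 1)


-- ===================== auxiliary development =====================

section Aux
variable {n : ℕ}

lemma cc_same (i : Fin n) : cg i * cg i = 1 := by
  have h := RingQuot.mkAlgHom_rel Av (HCrel.csq i)
  simpa [cg, map_mul, map_one] using h

lemma cc_anti {i j : Fin n} (h : i ≠ j) : cg i * cg j = -(cg j * cg i) := by
  have h' := RingQuot.mkAlgHom_rel Av (HCrel.canti i j h)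
  simpa [cg, map_mul, map_neg] using h'

lemma Tc_comm (i : Fin (n - 1)) (j : Fin n) (h1 : j ≠ lo i) (h2 : j ≠ hi i) :
    Tg i * cg j = cg j * Tg i := by
  have h' := RingQuot.mkAlgHom_rel Av (HCrel.Tccomm i j h1 h2)
  simpa [Tg, cg, map_mul] using h'

lemma Tc_lo (i : Fin (n - 1)) : Tg i * cg (lo i) = cg (hi i) * Tg i := by
  have h' := RingQuot.mkAlgHom_rel Av (HCrel.Tc i)
  simpa [Tg, cg, map_mul] using h'

lemma TT_comm {i j : Fin (n - 1)} (h : i.1 + 1 < j.1) : Tg i * Tg j = Tg j * Tg i := by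
  have h' := RingQuot.mkAlgHom_rel Av (HCrel.Tcomm i j h)
  simpa [Tg, map_mul] using h'

lemma T_quad (i : Fin (n - 1)) :
    (Tg i - algebraMap Av (HC n) vA) * (Tg i + 1) = 0 := by
  have h' := RingQuot.mkAlgHom_rel Av (HCrel.quad i)
  simpa [Tg, map_mul, map_sub, map_add, map_one, map_zero, AlgHom.commutes] using h'

/-- inverse of `v` in `Av`. -/
def viA : Av := (LaurentPolynomial.T (-1) : LaurentPolynomial Zh)

lemma viA_vA : viA * vA = 1 := by
  show (LaurentPolynomial.T (-1) * LaurentPolynomial.T 1 : LaurentPolynomial Zh) = 1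
  exact (by rw [← LaurentPolynomial.T_add]; norm_num :
    (LaurentPolynomial.T (-1) * LaurentPolynomial.T 1 : LaurentPolynomial Zh) = 1)

lemma Tg_unit (i : Fin (n - 1)) : ∃ u : HC n, Tg i * u = 1 ∧ u * Tg i = 1 := by
  refine ⟨viA • (Tg i + 1) - 1, ?_, ?_⟩
  · have hq : Tg i * (Tg i + 1) = vA • (Tg i + 1) := by
      have := T_quad (n := n) i
      rw [sub_mul, sub_eq_zero] at this
      rw [this, Algebra.smul_def]
    rw [mul_sub, mul_one, mul_smul_comm, hq, smul_smul, viA_vA, one_smul]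
    abel
  · have hq : (Tg i + 1) * Tg i = vA • (Tg i + 1) := by
      have h2 : (Tg i + 1) * Tg i = Tg i * (Tg i + 1) := by noncomm_ring
      have := T_quad (n := n) i
      rw [sub_mul, sub_eq_zero] at this
      rw [h2, this, Algebra.smul_def]
    rw [sub_mul, one_mul, smul_mul_assoc, hq, smul_smul, viA_vA, one_smul]
    abel

end Aux

section Aux2
variable {n : ℕ}

@[simp] lemma Tw_nil : Tw ([] : List (Fin (n - 1))) = 1 := by simp [Tw]
@[simp] lemma Tw_cons (i : Fin (n - 1)) (L : List (Fin (n - 1))) :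
    Tw (i :: L) = Tg i * Tw L := by simp [Tw]
lemma Tw_append (L M : List (Fin (n - 1))) : Tw (L ++ M) = Tw L * Tw M := by simp [Tw]

lemma Tw_unit (L : List (Fin (n - 1))) : ∃ u : HC n, Tw L * u = 1 ∧ u * Tw L = 1 := by
  induction L with
  | nil => exact ⟨1, by simp, by simp⟩
  | cons i L ih =>
    obtain ⟨u, hu1, hu2⟩ := ih
    obtain ⟨t, ht1, ht2⟩ := Tg_unit (n := n) i
    refine ⟨u * t, ?_, ?_⟩
    · rw [Tw_cons, mul_assoc, ← mul_assoc (Tw L), hu1, one_mul, ht1]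
    · rw [Tw_cons, mul_assoc, ← mul_assoc t, ht2, one_mul, hu2]

lemma tw_c_comm (L : List (Fin (n - 1))) (j : Fin n)
    (h : ∀ i ∈ L, j ≠ lo i ∧ j ≠ hi i) : cg j * Tw L = Tw L * cg j := by
  induction L with
  | nil => simp
  | cons i L ih =>
    have hi' := h i (by simp)
    rw [Tw_cons, ← mul_assoc, ← Tc_comm i j hi'.1 hi'.2, mul_assoc,
      ih (fun a ha => h a (by simp [ha])), mul_assoc]

/-- product of Clifford generators along a list. -/
def Pc (l : List (Fin n)) : HC n := (l.map cg).prod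

@[simp] lemma Pc_nil : Pc ([] : List (Fin n)) = 1 := by simp [Pc]
@[simp] lemma Pc_cons (a : Fin n) (l : List (Fin n)) : Pc (a :: l) = cg a * Pc l := by simp [Pc]
lemma Pc_append (l m : List (Fin n)) : Pc (l ++ m) = Pc l * Pc m := by simp [Pc]
@[simp] lemma Pc_concat (l : List (Fin n)) (a : Fin n) :
    Pc (l ++ [a]) = Pc l * cg a := by simp [Pc_append, Pc]

abbrev IsSign (ε : Av) : Prop := ε = 1 ∨ ε = -1

lemma IsSign.mul {ε δ : Av} (h1 : IsSign ε) (h2 : IsSign δ) : IsSign (ε * δ) := by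
  rcases h1 with h | h <;> rcases h2 with h' | h' <;> simp [h, h', IsSign]

lemma IsSign.mul_self {ε : Av} (h : IsSign ε) : ε * ε = 1 := by
  rcases h with h | h <;> simp [h]

lemma IsSign.pow (k : ℕ) : IsSign ((-1 : Av) ^ k) := by
  rcases Nat.even_or_odd k with h | h
  · left; exact h.neg_one_pow
  · right; exact h.neg_one_pow

-- bridge lemmas (avoid instance-mismatch rewriting issues on `RingQuot`)
lemma hneg_mul (a b : HC n) : (-a) * b = -(a * b) := neg_mul a b
lemma hmul_neg (a b : HC n) : a * (-b) = -(a * b) := mul_neg a b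
lemma hneg_smul (ε : Av) (x : HC n) : (-ε) • x = -(ε • x) := neg_smul ε x
lemma hsmul_neg (ε : Av) (x : HC n) : ε • (-x) = -(ε • x) := smul_neg ε x

lemma c_comm_Pc {j : Fin n} : ∀ {l : List (Fin n)}, j ∉ l →
    cg j * Pc l = ((-1 : Av) ^ l.length) • (Pc l * cg j) := by
  intro l
  induction l with
  | nil => intro _; simp
  | cons a l ih =>
    intro hj
    have hja : j ≠ a := by simp at hj; exact hj.1
    have hjl : j ∉ l := by simp at hj; exact hj.2
    calc cg j * Pc (a :: l) = (cg j * cg a) * Pc l := by rw [Pc_cons, mul_assoc]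
      _ = -(cg a * cg j * Pc l) := by rw [cc_anti hja, hneg_mul]
      _ = -(cg a * (cg j * Pc l)) := by rw [mul_assoc]
      _ = -(cg a * (((-1 : Av) ^ l.length) • (Pc l * cg j))) := by rw [ih hjl]
      _ = -(((-1 : Av) ^ l.length) • (cg a * (Pc l * cg j))) := by rw [mul_smul_comm]
      _ = ((-1 : Av) ^ (l.length + 1)) • (Pc (a :: l) * cg j) := by
          rw [pow_succ, mul_neg_one, hneg_smul, Pc_cons, mul_assoc]
      _ = ((-1 : Av) ^ (a :: l).length) • (Pc (a :: l) * cg j) := by simp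

lemma comm_Pc_of {l : List (Fin n)} {Q : HC n}
    (h : ∀ j ∈ l, cg j * Q = Q * cg j) : Pc l * Q = Q * Pc l := by
  induction l with
  | nil => simp
  | cons a l ih =>
    rw [Pc_cons, mul_assoc, ih (fun a ha => h a (by simp [ha])), ← mul_assoc,
      h a (by simp), mul_assoc]

lemma comm_Tw_of {L : List (Fin (n - 1))} {Q : HC n}
    (h : ∀ i ∈ L, Q * Tg i = Tg i * Q) : Q * Tw L = Tw L * Q := by
  induction L with
  | nil => simp
  | cons a L ih =>
    rw [Tw_cons, ← mul_assoc, h a (by simp), mul_assoc,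
      ih (fun a ha => h a (by simp [ha])), mul_assoc]

-- commSpan lemmas

lemma mem_comm' (a b : HC n) : a * b - b * a ∈ commSpan n :=
  Submodule.subset_span ⟨a, b, rfl⟩

lemma conj_mem {u u' : HC n} (x : HC n) (h1 : u * u' = 1) (h2 : u' * u = 1) :
    x - u * x * u' ∈ commSpan n := by
  have key : u * x * u' - x = u * (x * u') - (x * u') * u := by
    rw [mul_assoc, mul_assoc, h2, mul_one]
  have : u * x * u' - x ∈ commSpan n := key ▸ mem_comm' u (x * u')
  have h3 := neg_mem this
  simpa using h3

lemma half_exists : ∃ h : Av, h * 2 = 1 := by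
  obtain ⟨c, hc⟩ : ∃ c : Zh, c * 2 = 1 := by
    letI inst : IsLocalization.Away (2 : ℤ) Zh :=
      inferInstanceAs (IsLocalization (Submonoid.powers (2:ℤ)) (Localization (Submonoid.powers (2:ℤ))))
    refine ⟨@IsLocalization.Away.invSelf ℤ _ Zh _ _ 2 inst, ?_⟩
    have h := @IsLocalization.Away.mul_invSelf ℤ _ Zh _ _ 2 inst
    have h2 : (algebraMap ℤ Zh) 2 = (2 : Zh) := by simp
    rw [h2] at h
    rw [mul_comm]
    exact h
  refine ⟨LaurentPolynomial.C c, ?_⟩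
  show (LaurentPolynomial.C c : LaurentPolynomial Zh) * 2 = 1
  rw [show ((2 : LaurentPolynomial Zh)) = LaurentPolynomial.C 2 from (map_ofNat _ 2).symm,
    ← map_mul, hc, map_one]

lemma halve {x : HC n} (h : x + x ∈ commSpan n) : x ∈ commSpan n := by
  obtain ⟨c, hc⟩ := half_exists
  have hx : x = c • (x + x) := by
    rw [← two_smul Av x, smul_smul, hc, one_smul]
  rw [hx]
  exact Submodule.smul_mem _ _ h

-- the up-to-sign congruence relation

def SRel (n : ℕ) (x y : HC n) : Prop :=
  ∃ ε : Av, IsSign ε ∧ x - ε • y ∈ commSpan n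

lemma rel_of_eq {x y : HC n} (h : x = y) : SRel n x y :=
  ⟨1, Or.inl rfl, by simp [h]⟩

lemma rel_refl (x : HC n) : SRel n x x := rel_of_eq rfl

lemma rel_trans {x y z : HC n} (h1 : SRel n x y) (h2 : SRel n y z) : SRel n x z := by
  obtain ⟨ε, hε, hm⟩ := h1
  obtain ⟨δ, hδ, hm'⟩ := h2
  refine ⟨ε * δ, hε.mul hδ, ?_⟩
  have : x - (ε * δ) • z = (x - ε • y) + ε • (y - δ • z) := by
    rw [smul_sub, smul_smul]; abel
  rw [this]
  exact add_mem hm (Submodule.smul_mem _ _ hm')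

lemma rel_absorb {x y : HC n} {σ : Av} (hσ : IsSign σ) (h : SRel n x (σ • y)) : SRel n x y := by
  obtain ⟨ε, hε, hm⟩ := h
  exact ⟨ε * σ, hε.mul hσ, by rwa [smul_smul] at hm⟩

lemma rel_cyc (a b : HC n) : SRel n (a * b) (b * a) :=
  ⟨1, Or.inl rfl, by simpa using mem_comm' a b⟩

lemma rel_conj {u u' : HC n} (x : HC n) (h1 : u * u' = 1) (h2 : u' * u = 1) :
    SRel n x (u * x * u') :=
  ⟨1, Or.inl rfl, by simpa using conj_mem x h1 h2⟩

lemma mem_of_rel {x y : HC n} (h : SRel n x y) (hy : y ∈ commSpan n) : x ∈ commSpan n := by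
  obtain ⟨ε, _, hm⟩ := h
  have : x = (x - ε • y) + ε • y := by abel
  rw [this]
  exact add_mem hm (Submodule.smul_mem _ _ hy)

-- head-moving helpers
lemma comm_head {a b : HC n} (h : a * b = b * a) (c : HC n) : a * (b * c) = b * (a * c) := by
  rw [← mul_assoc, h, mul_assoc]

lemma move_head {a b c : HC n} (h : a * b = b * c) (d : HC n) : a * (b * d) = b * (c * d) := by
  rw [← mul_assoc, h, mul_assoc]

lemma conj_transfer {U Ui a b : HC n} (h : a * U = U * b) (h1 : U * Ui = 1) (h2 : Ui * U = 1) :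
    b * Ui = Ui * a := by
  calc b * Ui = Ui * U * b * Ui := by rw [h2, one_mul]
    _ = Ui * (U * b) * Ui := by rw [mul_assoc Ui U b]
    _ = Ui * (a * U) * Ui := by rw [← h]
    _ = Ui * a * (U * Ui) := by simp [mul_assoc]
    _ = Ui * a := by rw [h1, mul_one]

end Aux2

section Aux3
variable {n : ℕ}

-- more bridges
lemma hsmul_mul (ε : Av) (a b : HC n) : (ε • a) * b = ε • (a * b) := smul_mul_assoc ε a b
lemma hmul_smul (ε : Av) (a b : HC n) : a * (ε • b) = ε • (a * b) := mul_smul_comm ε a b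
lemma hsmul_smul (ε δ : Av) (x : HC n) : ε • (δ • x) = (ε * δ) • x := smul_smul ε δ x

/-- the consecutive run of `T`-indices `s, s+1, …, s+k-1`. -/
def runT (n s k : ℕ) : List (Fin (n - 1)) :=
  (List.range' s k).filterMap (fun m => if h : m < n - 1 then some ⟨m, h⟩ else none)

@[simp] lemma runT_zero (s : ℕ) : runT n s 0 = [] := rfl

lemma runT_cons {s : ℕ} (h : s < n - 1) (k : ℕ) :
    runT n s (k + 1) = ⟨s, h⟩ :: runT n (s + 1) k := by
  unfold runT
  rw [List.range'_succ]
  simp [List.filterMap_cons, dif_pos h]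

lemma mem_runT {s k : ℕ} (i : Fin (n - 1)) :
    i ∈ runT n s k ↔ s ≤ i.1 ∧ i.1 < s + k := by
  unfold runT
  rw [List.mem_filterMap]
  constructor
  · rintro ⟨m, hm, he⟩
    rw [List.mem_range'_1] at hm
    by_cases hmn : m < n - 1
    · rw [dif_pos hmn, Option.some_inj] at he
      rw [← he]
      exact ⟨hm.1, hm.2⟩
    · rw [dif_neg hmn] at he; cases he
  · rintro ⟨h1, h2⟩
    exact ⟨i.1, List.mem_range'_1.mpr ⟨h1, h2⟩, by rw [dif_pos i.2]⟩

lemma runT_pairwise {s k : ℕ} : (runT n s k).Pairwise (· < ·) := by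
  induction k generalizing s with
  | zero => simp
  | succ k ih =>
    by_cases hs : s < n - 1
    · rw [runT_cons hs]
      refine List.pairwise_cons.mpr ⟨?_, ih⟩
      intro x hx
      rw [mem_runT] at hx
      rw [Fin.lt_def]
      exact lt_of_lt_of_le (Nat.lt_succ_self s) hx.1
    · have : runT n s (k+1) = [] := by
        unfold runT
        apply List.eq_nil_iff_forall_not_mem.mpr
        intro i hi'
        rw [List.mem_filterMap] at hi'
        obtain ⟨m, hm, he⟩ := hi'
        rw [List.mem_range'_1] at hm
        by_cases hmn : m < n - 1
        · exact absurd (lt_of_le_of_lt hm.1 hmn) hs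
        · rw [dif_neg hmn] at he; cases he
      rw [this]; simp

lemma tw_runT_shift {s k : ℕ} (j : Fin n) (h1 : s + 1 ≤ j.1) (h2 : j.1 ≤ s + k)
    (hk : s + k ≤ n - 1) :
    cg j * Tw (runT n s k) = Tw (runT n s k) *
      cg ⟨j.1 - 1, Nat.lt_of_le_of_lt (Nat.sub_le _ _) j.2⟩ := by
  induction k generalizing s with
  | zero => omega
  | succ k ih =>
    have hs : s < n - 1 := by omega
    rw [runT_cons hs, Tw_cons]
    by_cases hj : j.1 = s + 1
    · have hjhi : j = hi (⟨s, hs⟩ : Fin (n - 1)) := Fin.ext (by simp [hi, hj])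
      have hstep : cg j * Tg ⟨s, hs⟩ = Tg ⟨s, hs⟩ * cg (lo ⟨s, hs⟩) := by
        rw [hjhi, ← Tc_lo]
      have hcomm : cg (lo (⟨s, hs⟩ : Fin (n - 1))) * Tw (runT n (s + 1) k) =
          Tw (runT n (s + 1) k) * cg (lo (⟨s, hs⟩ : Fin (n - 1))) := by
        apply tw_c_comm
        intro i hi'
        rw [mem_runT] at hi'
        constructor
        · exact Fin.ne_of_val_ne (by simp [lo]; omega)
        · exact Fin.ne_of_val_ne (by simp [lo, hi]; omega)
      have hfin : cg (lo (⟨s, hs⟩ : Fin (n - 1))) =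
          cg ⟨j.1 - 1, Nat.lt_of_le_of_lt (Nat.sub_le _ _) j.2⟩ := by
        congr 1
        exact Fin.ext (by simp [lo]; omega)
      rw [← mul_assoc, hstep, mul_assoc, hcomm, ← mul_assoc, hfin]
    · have hstep : cg j * Tg ⟨s, hs⟩ = Tg ⟨s, hs⟩ * cg j := by
        refine (Tc_comm _ _ ?_ ?_).symm
        · exact Fin.ne_of_val_ne (by simp [lo]; omega)
        · exact Fin.ne_of_val_ne (by simp [hi]; omega)
      rw [← mul_assoc, hstep, mul_assoc, ih (by omega) (by omega) (by omega), ← mul_assoc]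

lemma tw_runT_comm {s k : ℕ} (j : Fin n) (hj : j.1 < s ∨ s + k < j.1) :
    cg j * Tw (runT n s k) = Tw (runT n s k) * cg j := by
  apply tw_c_comm
  intro i hi'
  rw [mem_runT] at hi'
  constructor
  · exact Fin.ne_of_val_ne (by simp [lo]; omega)
  · exact Fin.ne_of_val_ne (by simp [hi]; omega)

lemma runs_comm {s k s' k' : ℕ} (h : s + k < s') :
    Tw (runT n s' k') * Tw (runT n s k) = Tw (runT n s k) * Tw (runT n s' k') := by
  apply comm_Tw_of
  intro i hi'
  rw [mem_runT] at hi'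
  refine (comm_Tw_of ?_).symm
  intro i' hi''
  rw [mem_runT] at hi''
  exact TT_comm (by omega)

end Aux3

section Core
variable {n : ℕ}

lemma core (s e : ℕ) (hs : s < n) (D B : HC n) (ε : Av) (hε : IsSign ε)
    (hshift : ∀ j : Fin n, s < j.1 → j.1 < e →
      cg j * B = B * cg ⟨j.1 - 1, Nat.lt_of_le_of_lt (Nat.sub_le _ _) j.2⟩)
    (hD : ∀ j : Fin n, s ≤ j.1 → j.1 < e → cg j * D = ε • (D * cg j)) :
    ∀ N : ℕ, ∀ l : List (Fin n), ((l.map Fin.val).sum ≤ N) → l.Pairwise (· < ·) →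
      (∀ j ∈ l, s ≤ j.1 ∧ j.1 < e) →
      (Even l.length → SRel n (D * (B * Pc l)) (D * B)) ∧
      (Odd l.length → SRel n (D * (B * Pc l)) (D * B * cg ⟨s, hs⟩)) := by
  intro N
  induction N using Nat.strong_induction_on with
  | _ N ih =>
    intro l hsum hpw hbd
    rcases List.eq_nil_or_concat l with rfl | ⟨l', j, hl⟩
    · constructor
      · intro _
        exact rel_of_eq (by simp)
      · intro h
        rw [List.length_nil, Nat.odd_iff] at h
        omega
    · rw [List.concat_eq_append] at hl
      subst hl
      have hjbd := hbd j (by simp)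
      have hpw' : l'.Pairwise (· < ·) := (List.pairwise_append.mp hpw).1
      have hlt : ∀ x ∈ l', x < j := fun x hx =>
        (List.pairwise_append.mp hpw).2.2 x hx j (by simp)
      have hsum' : (l'.map Fin.val).sum + j.1 ≤ N := by
        have := hsum
        simp only [List.map_append, List.sum_append, List.map_cons, List.sum_cons,
          List.map_nil, List.sum_nil, add_zero] at this
        omega
      by_cases hjs : j.1 = s
      · have hl' : l' = [] := by
          cases l' with
          | nil => rfl
          | cons a t =>
            have h1 := hbd a (by simp)
            have h2 := hlt a (by simp)
            rw [Fin.lt_def] at h2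
            omega
        subst hl'
        have hj : j = ⟨s, hs⟩ := Fin.ext hjs
        constructor
        · intro hev
          rw [List.nil_append, List.length_singleton, Nat.even_iff] at hev
          omega
        · intro _
          apply rel_of_eq
          rw [hj]
          simp [mul_assoc]
      · have hsj : s < j.1 := by omega
        have hshiftj := hshift j hsj hjbd.2
        have hDj := hD j hjbd.1 hjbd.2
        set j' : Fin n := ⟨j.1 - 1, Nat.lt_of_le_of_lt (Nat.sub_le _ _) j.2⟩ with hj'
        have hj'v : j'.1 = j.1 - 1 := rfl
        by_cases hmem : j' ∈ l'
        · -- cancellation of the adjacent pair (j-1, j)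
          rcases List.eq_nil_or_concat l' with rfl | ⟨l'', b, hlb⟩
          · simp at hmem
          · rw [List.concat_eq_append] at hlb
            subst hlb
            have hb : b = j' := by
              rcases List.mem_append.mp hmem with hin | hin
              · exfalso
                have h1 : j' < b := (List.pairwise_append.mp hpw').2.2 j' hin b (by simp)
                have h2 : b < j := hlt b (by simp)
                rw [Fin.lt_def] at h1 h2
                omega
              · simp at hin
                exact hin.symm
            subst hb
            have hjnotm : j' ∉ l'' := by
              intro hin
              have := (List.pairwise_append.mp hpw').2.2 j' hin j' (by simp)
              exact absurd this (lt_irrefl _)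
            have hinner : cg j' * Pc (l'' ++ [j']) = ((-1 : Av) ^ l''.length) • Pc l'' := by
              rw [Pc_concat, ← mul_assoc, c_comm_Pc hjnotm, hsmul_mul, mul_assoc, cc_same,
                mul_one]
            have key : cg j * (D * (B * Pc (l'' ++ [j']))) =
                (ε * (-1 : Av) ^ l''.length) • (D * (B * Pc l'')) := by
              calc cg j * (D * (B * Pc (l'' ++ [j'])))
                  = ε • (D * (cg j * (B * Pc (l'' ++ [j'])))) := by
                    rw [← mul_assoc, hDj, hsmul_mul, mul_assoc]
                _ = ε • (D * (B * (cg j' * Pc (l'' ++ [j'])))) := by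
                    rw [move_head hshiftj]
                _ = ε • (D * (B * (((-1 : Av) ^ l''.length) • Pc l''))) := by rw [hinner]
                _ = (ε * (-1 : Av) ^ l''.length) • (D * (B * Pc l'')) := by
                    rw [hmul_smul, hmul_smul, hsmul_smul]
            have hzeq : D * (B * Pc ((l'' ++ [j']) ++ [j])) =
                (D * (B * Pc (l'' ++ [j']))) * cg j := by
              rw [Pc_concat, ← mul_assoc B, ← mul_assoc]
            have step2 : SRel n (D * (B * Pc ((l'' ++ [j']) ++ [j]))) (D * (B * Pc l'')) := by
              apply rel_absorb (hε.mul (IsSign.pow _))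
              rw [hzeq]
              exact rel_trans (rel_cyc _ _) (rel_of_eq key)
            have hsum'' : (l''.map Fin.val).sum < N := by
              have := hsum'
              simp only [List.map_append, List.sum_append, List.map_cons, List.sum_cons,
                List.map_nil, List.sum_nil, add_zero] at this
              omega
            have ihres := ih _ hsum'' l'' le_rfl (List.pairwise_append.mp hpw').1
              (fun x hx => hbd x (by simp [hx]))
            constructor
            · intro hev
              refine rel_trans step2 (ihres.1 ?_)
              simp only [List.length_append, List.length_singleton, Nat.even_iff] at hev ⊢
              omega
            · intro hodd
              refine rel_trans step2 (ihres.2 ?_)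
              simp only [List.length_append, List.length_singleton, Nat.odd_iff] at hodd ⊢
              omega
        · -- shift j down to j - 1
          have key : cg j * (D * (B * Pc l')) =
              (ε * (-1 : Av) ^ l'.length) • (D * (B * Pc (l' ++ [j']))) := by
            calc cg j * (D * (B * Pc l'))
                = ε • (D * (cg j * (B * Pc l'))) := by
                  rw [← mul_assoc, hDj, hsmul_mul, mul_assoc]
              _ = ε • (D * (B * (cg j' * Pc l'))) := by rw [move_head hshiftj]
              _ = ε • (D * (B * (((-1 : Av) ^ l'.length) • (Pc l' * cg j')))) := by
                  rw [c_comm_Pc hmem]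
              _ = (ε * (-1 : Av) ^ l'.length) • (D * (B * Pc (l' ++ [j']))) := by
                  rw [Pc_concat, hmul_smul, hmul_smul, hsmul_smul]
          have hzeq : D * (B * Pc (l' ++ [j])) = (D * (B * Pc l')) * cg j := by
            rw [Pc_concat, ← mul_assoc B, ← mul_assoc]
          have step2 : SRel n (D * (B * Pc (l' ++ [j]))) (D * (B * Pc (l' ++ [j']))) := by
            apply rel_absorb (hε.mul (IsSign.pow _))
            rw [hzeq]
            exact rel_trans (rel_cyc _ _) (rel_of_eq key)
          have hpwn : (l' ++ [j']).Pairwise (· < ·) := by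
            rw [List.pairwise_append]
            refine ⟨hpw', by simp, ?_⟩
            intro a ha b hb
            simp at hb
            subst hb
            have h1 := hlt a ha
            rw [Fin.lt_def] at h1 ⊢
            have h2 : a ≠ j' := fun hh => hmem (hh ▸ ha)
            have h3 : a.1 ≠ j.1 - 1 := fun hh => h2 (Fin.ext (by rw [hj'v]; exact hh))
            omega
          have hbdn : ∀ x ∈ l' ++ [j'], s ≤ x.1 ∧ x.1 < e := by
            intro x hx
            rcases List.mem_append.mp hx with h | h
            · exact hbd x (by simp [h])
            · simp at h
              subst h
              rw [hj'v]
              omega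
          have hsumn : ((l' ++ [j']).map Fin.val).sum < N := by
            simp only [List.map_append, List.sum_append, List.map_cons, List.sum_cons,
              List.map_nil, List.sum_nil, add_zero, hj'v]
            omega
          have ihres := ih _ hsumn (l' ++ [j']) le_rfl hpwn hbdn
          constructor
          · intro hev
            refine rel_trans step2 (ihres.1 ?_)
            simpa using hev
          · intro hodd
            refine rel_trans step2 (ihres.2 ?_)
            simpa using hodd

end Core

section CompWord
variable {n : ℕ}

lemma compWord_eq (γ : Composition n) {g1 g2 : ℕ} (hγ : γ.blocks = [g1, g2])
    (hg1 : 0 < g1) (hg2 : 0 < g2) :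
    compWord γ = runT n 0 (g1 - 1) ++ runT n g1 (g2 - 1) := by
  have hsum : g1 + g2 = n := by
    have := γ.blocks_sum
    rw [hγ] at this
    simpa using this
  have hscan : γ.blocks.scanl (· + ·) 0 = [0, g1, g1 + g2] := by
    rw [hγ]
    simp [List.scanl]
  have hmemiff : ∀ i : Fin (n - 1),
      i ∈ compWord γ ↔ i ∈ runT n 0 (g1 - 1) ++ runT n g1 (g2 - 1) := by
    intro i
    have hi2 := i.2
    have h1 : i ∈ compWord γ ↔ ¬(i.1 + 1 = 0 ∨ i.1 + 1 = g1 ∨ i.1 + 1 = g1 + g2) := by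
      unfold compWord
      rw [List.mem_filter]
      simp [hscan]
    have h2 : i ∈ runT n 0 (g1 - 1) ++ runT n g1 (g2 - 1) ↔
        (0 ≤ i.1 ∧ i.1 < 0 + (g1 - 1)) ∨ (g1 ≤ i.1 ∧ i.1 < g1 + (g2 - 1)) := by
      rw [List.mem_append, mem_runT, mem_runT]
    rw [h1, h2]
    omega
  have nd1 : (compWord γ).Nodup := (List.nodup_finRange _).filter _
  have pw2 : (runT n 0 (g1 - 1) ++ runT n g1 (g2 - 1)).Pairwise (· < ·) := by
    rw [List.pairwise_append]
    refine ⟨runT_pairwise, runT_pairwise, ?_⟩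
    intro a ha b hb
    rw [mem_runT] at ha hb
    rw [Fin.lt_def]
    omega
  have nd2 : (runT n 0 (g1 - 1) ++ runT n g1 (g2 - 1)).Nodup :=
    pw2.imp (fun h => ne_of_lt h)
  have sorted1 : (compWord γ).Pairwise (· ≤ ·) := by
    have hp : (compWord γ).Pairwise (· < ·) := by
      have := List.pairwise_lt_finRange (n - 1)
      exact List.Pairwise.filter _ this
    exact hp.imp (fun h => le_of_lt h)
  have sorted2 : (runT n 0 (g1 - 1) ++ runT n g1 (g2 - 1)).Pairwise (· ≤ ·) :=
    pw2.imp (fun h => le_of_lt h)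
  exact List.Perm.eq_of_pairwise' sorted1 sorted2
    ((List.perm_ext_iff_of_nodup nd1 nd2).mpr hmemiff)

end CompWord

section Endgame
variable {n : ℕ}

lemma hneg_one_smul (x : HC n) : (-1 : Av) • x = -x := neg_one_smul Av x

/-- Endgame when the first block has size ≥ 2 (abstract form). -/
lemma endgame_a' (X Y : HC n) (z o w : Fin n)
    (hXu : ∃ Xi, X * Xi = 1 ∧ Xi * X = 1)
    (hoX : cg o * X = X * cg z)
    (hwX : cg w * X = X * cg w)
    (hYX : Y * X = X * Y)
    (hoY : cg o * Y = Y * cg o)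
    (hwo : w ≠ o) :
    (Y * cg w) * X * cg z ∈ commSpan n := by
  obtain ⟨Xi, hXi1, hXi2⟩ := hXu
  have hzXi : cg z * Xi = Xi * cg o := conj_transfer hoX hXi1 hXi2
  have hYXi : Y * Xi = Xi * Y := conj_transfer hYX hXi1 hXi2
  have hwXi : cg w * Xi = Xi * cg w := conj_transfer hwX hXi1 hXi2
  set F0 : HC n := (X * cg z) * (Y * cg w) with hF0
  set F1 : HC n := (X * cg o) * (Y * cg w) with hF1
  have e1 : X * F0 * Xi = F1 := by
    rw [hF0, hF1]
    calc X * ((X * cg z) * (Y * cg w)) * Xi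
        = X * (X * (cg z * (Y * (cg w * Xi)))) := by simp only [mul_assoc]
      _ = X * (X * (cg z * (Y * (Xi * cg w)))) := by rw [hwXi]
      _ = X * (X * (cg z * (Xi * (Y * cg w)))) := by rw [comm_head hYXi]
      _ = X * (X * (Xi * (cg o * (Y * cg w)))) := by rw [move_head hzXi]
      _ = X * ((X * Xi) * (cg o * (Y * cg w))) := by rw [mul_assoc X Xi]
      _ = X * (cg o * (Y * cg w)) := by rw [hXi1, one_mul]
      _ = (X * cg o) * (Y * cg w) := by rw [mul_assoc]
  have mem1 : F0 - F1 ∈ commSpan n := by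
    have h := conj_mem F0 hXi1 hXi2
    rwa [e1] at h
  have e2 : cg o * F1 * cg o = -F0 := by
    rw [hF0, hF1]
    calc cg o * ((X * cg o) * (Y * cg w)) * cg o
        = cg o * (X * (cg o * (Y * (cg w * cg o)))) := by simp only [mul_assoc]
      _ = cg o * (X * (cg o * (Y * (-(cg o * cg w))))) := by rw [cc_anti hwo]
      _ = -(cg o * (X * (cg o * (Y * (cg o * cg w))))) := by
          rw [hmul_neg, hmul_neg, hmul_neg, hmul_neg]
      _ = -(cg o * (X * (cg o * (cg o * (Y * cg w))))) := by rw [comm_head hoY.symm]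
      _ = -(cg o * (X * ((cg o * cg o) * (Y * cg w)))) := by rw [mul_assoc (cg o) (cg o)]
      _ = -(cg o * (X * (Y * cg w))) := by rw [cc_same, one_mul]
      _ = -(X * (cg z * (Y * cg w))) := by rw [move_head hoX]
      _ = -((X * cg z) * (Y * cg w)) := by rw [mul_assoc]
  have mem2 : F1 + F0 ∈ commSpan n := by
    have h := conj_mem F1 (cc_same o) (cc_same o)
    rw [e2, sub_neg_eq_add] at h
    exact h
  have memF0 : F0 ∈ commSpan n := by
    apply halve
    have heq : F0 + F0 = (F1 + F0) + (F0 - F1) := by abel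
    rw [heq]
    exact add_mem mem2 mem1
  have hG : (Y * cg w) * X * cg z - F0 ∈ commSpan n := by
    have he : (Y * cg w) * X * cg z = (Y * cg w) * (X * cg z) := by rw [mul_assoc]
    rw [he, hF0]
    exact mem_comm' (Y * cg w) (X * cg z)
  have : (Y * cg w) * X * cg z = ((Y * cg w) * X * cg z - F0) + F0 := by abel
  rw [this]
  exact add_mem hG memF0

/-- Endgame when the second block has size ≥ 2 (abstract form). -/
lemma endgame_b' (X Y : HC n) (z w w' : Fin n)
    (hYu : ∃ Yi, Y * Yi = 1 ∧ Yi * Y = 1)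
    (hw'Y : cg w' * Y = Y * cg w)
    (hzY : cg z * Y = Y * cg z)
    (hXY : X * Y = Y * X)
    (hw'X : cg w' * X = X * cg w')
    (hzw' : z ≠ w') :
    (Y * cg w) * X * cg z ∈ commSpan n := by
  obtain ⟨Yi, hYi1, hYi2⟩ := hYu
  have hwYi : cg w * Yi = Yi * cg w' := conj_transfer hw'Y hYi1 hYi2
  have hzYi : cg z * Yi = Yi * cg z := conj_transfer hzY hYi1 hYi2
  have hXYi : X * Yi = Yi * X := conj_transfer hXY hYi1 hYi2
  set G0 : HC n := (Y * cg w) * X * cg z with hG0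
  set G1 : HC n := (Y * cg w') * X * cg z with hG1
  have e1 : Y * G0 * Yi = G1 := by
    rw [hG0, hG1]
    calc Y * ((Y * cg w) * X * cg z) * Yi
        = Y * (Y * (cg w * (X * (cg z * Yi)))) := by simp only [mul_assoc]
      _ = Y * (Y * (cg w * (X * (Yi * cg z)))) := by rw [hzYi]
      _ = Y * (Y * (cg w * (Yi * (X * cg z)))) := by rw [comm_head hXYi]
      _ = Y * (Y * (Yi * (cg w' * (X * cg z)))) := by rw [move_head hwYi]
      _ = Y * ((Y * Yi) * (cg w' * (X * cg z))) := by rw [mul_assoc Y Yi]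
      _ = Y * (cg w' * (X * cg z)) := by rw [hYi1, one_mul]
      _ = (Y * cg w') * X * cg z := by simp only [mul_assoc]
  have mem1 : G0 - G1 ∈ commSpan n := by
    have h := conj_mem G0 hYi1 hYi2
    rwa [e1] at h
  have e2 : cg w' * G1 * cg w' = -G0 := by
    rw [hG0, hG1]
    calc cg w' * ((Y * cg w') * X * cg z) * cg w'
        = cg w' * (Y * (cg w' * (X * (cg z * cg w')))) := by simp only [mul_assoc]
      _ = cg w' * (Y * (cg w' * (X * (-(cg w' * cg z))))) := by rw [cc_anti hzw']
      _ = -(cg w' * (Y * (cg w' * (X * (cg w' * cg z))))) := by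
          rw [hmul_neg, hmul_neg, hmul_neg, hmul_neg]
      _ = -(cg w' * (Y * (cg w' * (cg w' * (X * cg z))))) := by rw [comm_head hw'X.symm]
      _ = -(cg w' * (Y * ((cg w' * cg w') * (X * cg z)))) := by rw [mul_assoc (cg w') (cg w')]
      _ = -(cg w' * (Y * (X * cg z))) := by rw [cc_same, one_mul]
      _ = -(Y * (cg w * (X * cg z))) := by rw [move_head hw'Y]
      _ = -((Y * cg w) * X * cg z) := by simp only [mul_assoc]
  have mem2 : G1 + G0 ∈ commSpan n := by
    have h := conj_mem G1 (cc_same w') (cc_same w')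
    rw [e2, sub_neg_eq_add] at h
    exact h
  apply halve
  have heq : G0 + G0 = (G1 + G0) + (G0 - G1) := by abel
  rw [heq]
  exact add_mem mem2 mem1

end Endgame


/-- For a two-part composition `γ = (γ₁, γ₂)` of `n` and subsets
`I₁ ⊆ {1,…,γ₁}`, `I₂ ⊆ {γ₁+1,…,n}` with `|I₁| + |I₂|` even:
if `|I₁|, |I₂|` are odd then `T_{w_γ} C_{I₁} C_{I₂} ≡ 0`, and if they are even then
`T_{w_γ} C_{I₁} C_{I₂} ≡ ± T_{w_γ}`, modulo `[HC_n, HC_n]`. -/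
theorem statement_6 (n : ℕ) (hn : 1 ≤ n) (γ : Composition n) (g1 g2 : ℕ)
    (hγ : γ.blocks = [g1, g2]) (I1 I2 : Finset (Fin n))
    (hI1 : ∀ i ∈ I1, (i : ℕ) < g1) (hI2 : ∀ i ∈ I2, g1 ≤ (i : ℕ))
    (hpar : Even (I1.card + I2.card)) :
    (Odd I1.card → Odd I2.card → Twγ γ * Cset I1 * Cset I2 ∈ commSpan n) ∧
    (Even I1.card → Even I2.card →
      ∃ ε : Av, (ε = 1 ∨ ε = -1) ∧
        Twγ γ * Cset I1 * Cset I2 - ε • Twγ γ ∈ commSpan n) := by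
  have hb1 : (0:ℕ) < g1 := γ.blocks_pos (by rw [hγ]; simp)
  have hb2 : (0:ℕ) < g2 := γ.blocks_pos (by rw [hγ]; simp)
  have hsum : g1 + g2 = n := by
    have := γ.blocks_sum
    rw [hγ] at this
    simpa using this
  have h0n : 0 < n := by omega
  have hg1n : g1 < n := by omega
  have hTw : Twγ γ = Tw (runT n 0 (g1-1)) * Tw (runT n g1 (g2-1)) := by
    rw [Twγ, compWord_eq γ hγ hb1 hb2, Tw_append]
  have hmem1 : ∀ j ∈ I1.sort (· ≤ ·), j.1 < g1 := fun j hj => hI1 j ((Finset.mem_sort _).mp hj)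
  have hmem2 : ∀ j ∈ I2.sort (· ≤ ·), g1 ≤ j.1 := fun j hj => hI2 j ((Finset.mem_sort _).mp hj)
  have hYP1 : Pc (I1.sort (· ≤ ·)) * Tw (runT n g1 (g2-1)) =
      Tw (runT n g1 (g2-1)) * Pc (I1.sort (· ≤ ·)) :=
    comm_Pc_of (fun j hj => tw_runT_comm j (Or.inl (hmem1 j hj)))
  have hC1 : Cset I1 = Pc (I1.sort (· ≤ ·)) := rfl
  have hC2 : Cset I2 = Pc (I2.sort (· ≤ ·)) := rfl
  have hZ : Twγ γ * Cset I1 * Cset I2 =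
      (Tw (runT n 0 (g1-1)) * Pc (I1.sort (· ≤ ·))) *
        (Tw (runT n g1 (g2-1)) * Pc (I2.sort (· ≤ ·))) := by
    rw [hTw, hC1, hC2, mul_assoc (Tw (runT n 0 (g1-1))) (Tw (runT n g1 (g2-1))) (Pc _),
      ← hYP1, ← mul_assoc (Tw (runT n 0 (g1-1))) (Pc (I1.sort (· ≤ ·))) (Tw (runT n g1 (g2-1))),
      mul_assoc (Tw (runT n 0 (g1-1)) * Pc (I1.sort (· ≤ ·)))]
  have hshiftY : ∀ j : Fin n, g1 < j.1 → j.1 < n →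
      cg j * Tw (runT n g1 (g2-1)) = Tw (runT n g1 (g2-1)) *
        cg ⟨j.1-1, Nat.lt_of_le_of_lt (Nat.sub_le _ _) j.2⟩ := by
    intro j h1 h2
    exact tw_runT_shift j (by omega) (by omega) (by omega)
  have hshiftX : ∀ j : Fin n, 0 < j.1 → j.1 < g1 →
      cg j * Tw (runT n 0 (g1-1)) = Tw (runT n 0 (g1-1)) *
        cg ⟨j.1-1, Nat.lt_of_le_of_lt (Nat.sub_le _ _) j.2⟩ := by
    intro j h1 h2
    exact tw_runT_shift j (by omega) (by omega) (by omega)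
  have hDX : ∀ j : Fin n, g1 ≤ j.1 → j.1 < n →
      cg j * (Tw (runT n 0 (g1-1)) * Pc (I1.sort (· ≤ ·))) =
      ((-1:Av) ^ (I1.sort (· ≤ ·)).length) •
        ((Tw (runT n 0 (g1-1)) * Pc (I1.sort (· ≤ ·))) * cg j) := by
    intro j h1 h2
    have hcX : cg j * Tw (runT n 0 (g1-1)) = Tw (runT n 0 (g1-1)) * cg j :=
      tw_runT_comm j (Or.inr (by omega))
    have hnotin : j ∉ I1.sort (· ≤ ·) := fun hj => by have := hmem1 j hj; omega
    calc cg j * (Tw (runT n 0 (g1-1)) * Pc (I1.sort (· ≤ ·)))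
        = Tw (runT n 0 (g1-1)) * (cg j * Pc (I1.sort (· ≤ ·))) := comm_head hcX _
      _ = Tw (runT n 0 (g1-1)) * (((-1:Av) ^ (I1.sort (· ≤ ·)).length) •
            (Pc (I1.sort (· ≤ ·)) * cg j)) := by rw [c_comm_Pc hnotin]
      _ = ((-1:Av) ^ (I1.sort (· ≤ ·)).length) •
            ((Tw (runT n 0 (g1-1)) * Pc (I1.sort (· ≤ ·))) * cg j) := by
          rw [hmul_smul, ← mul_assoc]
  have app1 := core g1 n hg1n (Tw (runT n 0 (g1-1)) * Pc (I1.sort (· ≤ ·)))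
    (Tw (runT n g1 (g2-1))) ((-1:Av) ^ (I1.sort (· ≤ ·)).length) (IsSign.pow _)
    hshiftY hDX ((I2.sort (· ≤ ·)).map Fin.val).sum (I2.sort (· ≤ ·)) le_rfl
    (Finset.sortedLT_sort I2).pairwise (fun j hj => ⟨hmem2 j hj, j.2⟩)
  have hcard1 : (I1.sort (· ≤ ·)).length = I1.card := Finset.length_sort _
  have hcard2 : (I2.sort (· ≤ ·)).length = I2.card := Finset.length_sort _
  constructor
  · -- odd–odd case
    intro ho1 ho2
    have ho2' : Odd (I2.sort (· ≤ ·)).length := by rw [hcard2]; exact ho2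
    have ho1' : Odd (I1.sort (· ≤ ·)).length := by rw [hcard1]; exact ho1
    have r1 := app1.2 ho2'
    have r2 : SRel n ((Tw (runT n 0 (g1-1)) * Pc (I1.sort (· ≤ ·))) * Tw (runT n g1 (g2-1)) *
          cg ⟨g1, hg1n⟩)
        ((Tw (runT n g1 (g2-1)) * cg ⟨g1, hg1n⟩) *
          (Tw (runT n 0 (g1-1)) * Pc (I1.sort (· ≤ ·)))) :=
      rel_trans (rel_of_eq (mul_assoc _ _ _)) (rel_cyc _ _)
    have hD3 : ∀ j : Fin n, 0 ≤ j.1 → j.1 < g1 →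
        cg j * (Tw (runT n g1 (g2-1)) * cg ⟨g1, hg1n⟩) =
          (-1:Av) • ((Tw (runT n g1 (g2-1)) * cg ⟨g1, hg1n⟩) * cg j) := by
      intro j h1 h2
      have hcY : cg j * Tw (runT n g1 (g2-1)) = Tw (runT n g1 (g2-1)) * cg j :=
        tw_runT_comm j (Or.inl h2)
      have hanti : cg j * cg ⟨g1, hg1n⟩ = -(cg ⟨g1, hg1n⟩ * cg j) :=
        cc_anti (Fin.ne_of_val_ne (show j.1 ≠ g1 by omega))
      calc cg j * (Tw (runT n g1 (g2-1)) * cg ⟨g1, hg1n⟩)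
          = Tw (runT n g1 (g2-1)) * (cg j * cg ⟨g1, hg1n⟩) := comm_head hcY _
        _ = Tw (runT n g1 (g2-1)) * (-(cg ⟨g1, hg1n⟩ * cg j)) := by rw [hanti]
        _ = -(Tw (runT n g1 (g2-1)) * (cg ⟨g1, hg1n⟩ * cg j)) := hmul_neg _ _
        _ = (-1:Av) • ((Tw (runT n g1 (g2-1)) * cg ⟨g1, hg1n⟩) * cg j) := by
            rw [hneg_one_smul, ← mul_assoc]
    have app3 := core 0 g1 h0n (Tw (runT n g1 (g2-1)) * cg ⟨g1, hg1n⟩)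
      (Tw (runT n 0 (g1-1))) (-1 : Av) (Or.inr rfl) hshiftX hD3
      ((I1.sort (· ≤ ·)).map Fin.val).sum (I1.sort (· ≤ ·)) le_rfl
      (Finset.sortedLT_sort I1).pairwise (fun j hj => ⟨Nat.zero_le _, hmem1 j hj⟩)
    have r3 := app3.2 ho1'
    have hGmem : (Tw (runT n g1 (g2-1)) * cg ⟨g1, hg1n⟩) * Tw (runT n 0 (g1-1)) *
        cg ⟨0, h0n⟩ ∈ commSpan n := by
      by_cases hca : 2 ≤ g1
      · refine endgame_a' (Tw (runT n 0 (g1-1))) (Tw (runT n g1 (g2-1)))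
          ⟨0, h0n⟩ ⟨1, by omega⟩ ⟨g1, hg1n⟩ (Tw_unit _) ?_ ?_ ?_ ?_ ?_
        · exact tw_runT_shift ⟨1, by omega⟩ (show 0 + 1 ≤ 1 by omega)
            (show 1 ≤ 0 + (g1 - 1) by omega) (by omega)
        · exact tw_runT_comm _ (Or.inr (show 0 + (g1-1) < g1 by omega))
        · exact runs_comm (by omega)
        · exact tw_runT_comm _ (Or.inl (show (1:ℕ) < g1 by omega))
        · exact Fin.ne_of_val_ne (show g1 ≠ 1 by omega)
      · by_cases hcb : 2 ≤ g2
        · refine endgame_b' (Tw (runT n 0 (g1-1))) (Tw (runT n g1 (g2-1)))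
            ⟨0, h0n⟩ ⟨g1, hg1n⟩ ⟨g1+1, by omega⟩ (Tw_unit _) ?_ ?_ ?_ ?_ ?_
          · exact tw_runT_shift ⟨g1+1, by omega⟩ (show g1 + 1 ≤ g1 + 1 by omega)
              (show g1 + 1 ≤ g1 + (g2 - 1) by omega) (by omega)
          · exact tw_runT_comm _ (Or.inl (show (0:ℕ) < g1 by omega))
          · exact (runs_comm (by omega)).symm
          · exact tw_runT_comm _ (Or.inr (show 0 + (g1-1) < g1 + 1 by omega))
          · exact Fin.ne_of_val_ne (show (0:ℕ) ≠ g1 + 1 by omega)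
        · have hg1e : g1 = 1 := by omega
          have hg2e : g2 = 1 := by omega
          have hrw : Tw (runT n 0 (g1-1)) = 1 := by rw [hg1e]; simp
          have hrw2 : Tw (runT n g1 (g2-1)) = 1 := by rw [hg2e]; simp
          rw [hrw, hrw2, one_mul, mul_one]
          apply halve
          have heq : cg (⟨g1, hg1n⟩ : Fin n) * cg ⟨0, h0n⟩ + cg ⟨g1, hg1n⟩ * cg ⟨0, h0n⟩ =
              cg ⟨g1, hg1n⟩ * cg ⟨0, h0n⟩ - cg ⟨0, h0n⟩ * cg ⟨g1, hg1n⟩ := by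
            rw [cc_anti (show (⟨0, h0n⟩ : Fin n) ≠ ⟨g1, hg1n⟩ from
              Fin.ne_of_val_ne (show (0:ℕ) ≠ g1 by omega)), sub_neg_eq_add]
          rw [heq]
          exact mem_comm' _ _
    exact mem_of_rel (rel_trans (rel_of_eq hZ) (rel_trans r1 (rel_trans r2 r3))) hGmem
  · -- even–even case
    intro he1 he2
    have he2' : Even (I2.sort (· ≤ ·)).length := by rw [hcard2]; exact he2
    have he1' : Even (I1.sort (· ≤ ·)).length := by rw [hcard1]; exact he1
    have r1 := app1.1 he2'
    have r2 : SRel n ((Tw (runT n 0 (g1-1)) * Pc (I1.sort (· ≤ ·))) * Tw (runT n g1 (g2-1)))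
        (Tw (runT n g1 (g2-1)) * (Tw (runT n 0 (g1-1)) * Pc (I1.sort (· ≤ ·)))) :=
      rel_cyc _ _
    have hD2 : ∀ j : Fin n, 0 ≤ j.1 → j.1 < g1 →
        cg j * Tw (runT n g1 (g2-1)) = (1:Av) • (Tw (runT n g1 (g2-1)) * cg j) := by
      intro j _ h2
      rw [one_smul]
      exact tw_runT_comm j (Or.inl h2)
    have app2 := core 0 g1 h0n (Tw (runT n g1 (g2-1))) (Tw (runT n 0 (g1-1))) (1:Av)
      (Or.inl rfl) hshiftX hD2 ((I1.sort (· ≤ ·)).map Fin.val).sum (I1.sort (· ≤ ·)) le_rfl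
      (Finset.sortedLT_sort I1).pairwise (fun j hj => ⟨Nat.zero_le _, hmem1 j hj⟩)
    have r3 := app2.1 he1'
    have r4 : SRel n (Tw (runT n g1 (g2-1)) * Tw (runT n 0 (g1-1))) (Twγ γ) :=
      rel_trans (rel_cyc _ _) (rel_of_eq hTw.symm)
    exact rel_trans (rel_of_eq hZ) (rel_trans r1 (rel_trans r2 (rel_trans r3 r4)))

end
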